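/- The dual Cauchy identity: Σ_λ s_λ(x_1,...,x_n) s_{λ'}(y_1,...,y_k) = Π_{i=1}^n Π_{j=1}^k (1 + x_i y_j), where the sum runs over all partitions λ contained in the n×k rectangle and λ' denotes the conjugate partition. -/

import Mathlib

/-- q-integer `[m]_q = (1-q^m)/(1-q)`. -/
noncomputable def qnum (q : ℝ) (m : ℕ) : ℝ := (1 - q ^ m) / (1 - q)

/-- q-factorial `[m]_q!`. -/
noncomputable def qfact (q : ℝ) (m : ℕ) : ℝ := ∏ j ∈ Finset.range m, qnum q (j + 1)

/-- Schur polynomial (bialternant formula): ratio of the generalized Vandermonde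
determinant with exponents `a_i = λ_i + n - i` to the Vandermonde determinant. -/
noncomputable def schur (n : ℕ) (lam : Fin n → ℕ) (x : Fin n → ℝ) : ℝ :=
  Matrix.det (Matrix.of fun i j : Fin n => x j ^ (lam i + (n - 1 - (i : ℕ)))) /
    Matrix.det (Matrix.of fun i j : Fin n => x j ^ (n - 1 - (i : ℕ)))

/-- Conjugate partition: `λ´_j = #{i : λ_i > j}` (0-indexed `j`). -/
noncomputable def conj (n k : ℕ) (lam : Fin n → ℕ) (j : Fin k) : ℕ :=
  (Finset.univ.filter (fun i : Fin n => (j : ℕ) < lam i)).card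

noncomputable section Aux
open Finset Equiv Matrix


lemma sm_bound {n N : ℕ} {f : Fin n → Fin N} (hf : StrictMono f) {a b : Fin n} (hab : a ≤ b) :
    (f a : ℕ) + ((b : ℕ) - (a : ℕ)) ≤ (f b : ℕ) := by
  have h1 : (Finset.Icc a b).image f ⊆ Finset.Icc (f a) (f b) := by
    intro t ht
    obtain ⟨u, hu, rfl⟩ := Finset.mem_image.mp ht
    rw [Finset.mem_Icc] at *
    exact ⟨hf.monotone hu.1, hf.monotone hu.2⟩
  have h2 := Finset.card_le_card h1
  rw [Finset.card_image_of_injective _ hf.injective, Fin.card_Icc, Fin.card_Icc] at h2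
  have h3 : (f a : ℕ) ≤ (f b : ℕ) := hf.monotone hab
  have h4 : (a : ℕ) ≤ (b : ℕ) := hab
  omega

lemma sign_mul_vdm {m : ℕ} (p : Equiv.Perm (Fin m)) (v : Fin m → ℝ) :
    ((Equiv.Perm.sign p : ℤ) : ℝ) * (∏ i, ∏ j ∈ Finset.Ioi i, (v j - v i)) =
      ∏ i, ∏ j ∈ Finset.Ioi i, (v (p j) - v (p i)) := by
  have h1 : (vandermonde v).submatrix p id = vandermonde (v ∘ p) := by
    ext i j; simp [Matrix.vandermonde]
  have h2 := Matrix.det_permute p (vandermonde v)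
  rw [h1, Matrix.det_vandermonde, Matrix.det_vandermonde] at h2
  rw [← h2]
  norm_cast

lemma sign_rev_real (m : ℕ) :
    ((Equiv.Perm.sign (Fin.revPerm (n := m)) : ℤ) : ℝ) =
      (-1 : ℝ) ^ (∑ i : Fin m, ((m : ℕ) - 1 - (i : ℕ))) := by
  have h := sign_mul_vdm (Fin.revPerm (n := m)) (fun i => (i : ℝ))
  have hP : (∏ i : Fin m, ∏ j ∈ Finset.Ioi i, ((j : ℝ) - (i : ℝ))) ≠ 0 := by
    apply Finset.prod_ne_zero_iff.mpr
    intro i _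
    apply Finset.prod_ne_zero_iff.mpr
    intro j hj
    have h5 : i < j := Finset.mem_Ioi.mp hj
    have h5' : (i : ℕ) < (j : ℕ) := h5
    have : (i : ℝ) < (j : ℝ) := by exact_mod_cast h5'
    linarith
  have h2 : (∏ i : Fin m, ∏ j ∈ Finset.Ioi i, ((Fin.revPerm j : ℝ) - (Fin.revPerm i : ℝ))) =
      (-1 : ℝ) ^ (∑ i : Fin m, ((m : ℕ) - 1 - (i : ℕ))) *
        ∏ i : Fin m, ∏ j ∈ Finset.Ioi i, ((j : ℝ) - (i : ℝ)) := by
    rw [← Finset.prod_pow_eq_pow_sum, ← Finset.prod_mul_distrib]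
    refine Finset.prod_congr rfl (fun i _ => ?_)
    have hcard : (Finset.Ioi i).card = m - 1 - (i : ℕ) := Fin.card_Ioi i
    rw [← hcard, ← Finset.prod_const, ← Finset.prod_mul_distrib]
    refine Finset.prod_congr rfl (fun j hj => ?_)
    have h5 : i < j := Finset.mem_Ioi.mp hj
    have h5' : (i : ℕ) < (j : ℕ) := h5
    have hj1 : (j : ℕ) ≤ m - 1 := by have := j.isLt; omega
    have hi1 : (i : ℕ) ≤ m - 1 := by have := i.isLt; omega
    have hrj : ((Fin.revPerm j : Fin m) : ℕ) = m - 1 - (j : ℕ) := by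
      simp [Fin.val_rev]; omega
    have hri : ((Fin.revPerm i : Fin m) : ℕ) = m - 1 - (i : ℕ) := by
      simp [Fin.val_rev]; omega
    rw [hrj, hri]
    push_cast [Nat.cast_sub hj1, Nat.cast_sub hi1, Nat.cast_sub (Nat.one_le_iff_ne_zero.mpr (by have := i.isLt; omega : m ≠ 0))]
    ring
  rw [h2] at h
  exact mul_right_cancel₀ hP h


lemma compl_card {n k : ℕ} (S : Finset (Fin (n + k))) (hS : S.card = n) : Sᶜ.card = k := by
  rw [Finset.card_compl, hS]
  simp

noncomputable def permS {n k : ℕ} (S : Finset (Fin (n + k))) (hS : S.card = n) :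
    Equiv.Perm (Fin (n + k)) :=
  Equiv.ofBijective
    (fun r => Sum.elim (S.orderEmbOfFin hS) (Sᶜ.orderEmbOfFin (compl_card S hS))
      (finSumFinEquiv.symm r))
    (by
      rw [Fintype.bijective_iff_injective_and_card]
      refine ⟨?_, rfl⟩
      intro r r' h
      have hinj : ∀ (d d' : Fin n ⊕ Fin k),
          Sum.elim (S.orderEmbOfFin hS) (Sᶜ.orderEmbOfFin (compl_card S hS)) d =
          Sum.elim (S.orderEmbOfFin hS) (Sᶜ.orderEmbOfFin (compl_card S hS)) d' → d = d' := by
        rintro (i | i) (i' | i') hd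
        · simp only [Sum.elim_inl] at hd
          exact congrArg Sum.inl ((S.orderEmbOfFin hS).injective hd)
        · exfalso
          simp only [Sum.elim_inl, Sum.elim_inr] at hd
          have h1 := Finset.orderEmbOfFin_mem S hS i
          have h2 := Finset.orderEmbOfFin_mem Sᶜ (compl_card S hS) i'
          rw [hd] at h1
          exact (Finset.mem_compl.mp h2) h1
        · exfalso
          simp only [Sum.elim_inl, Sum.elim_inr] at hd
          have h1 := Finset.orderEmbOfFin_mem S hS i'
          have h2 := Finset.orderEmbOfFin_mem Sᶜ (compl_card S hS) i
          rw [hd] at h2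
          exact (Finset.mem_compl.mp h2) h1
        · simp only [Sum.elim_inr] at hd
          exact congrArg Sum.inr ((Sᶜ.orderEmbOfFin (compl_card S hS)).injective hd)
      exact finSumFinEquiv.symm.injective (hinj _ _ h))

lemma permS_apply_inl {n k : ℕ} (S : Finset (Fin (n + k))) (hS : S.card = n) (i : Fin n) :
    permS S hS (finSumFinEquiv (Sum.inl i)) = S.orderEmbOfFin hS i := by
  simp [permS, Equiv.ofBijective]

lemma permS_apply_inr {n k : ℕ} (S : Finset (Fin (n + k))) (hS : S.card = n) (j : Fin k) :
    permS S hS (finSumFinEquiv (Sum.inr j)) = Sᶜ.orderEmbOfFin (compl_card S hS) j := by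
  simp [permS, Equiv.ofBijective]

lemma sign_permS {n k : ℕ} (S : Finset (Fin (n + k))) (hS : S.card = n) :
    ((Equiv.Perm.sign (permS S hS) : ℤ) : ℝ) =
      (-1 : ℝ) ^ ((∑ i ∈ S, (i : ℕ)) + ∑ i : Fin n, (i : ℕ)) := by
  suffices H : ∀ m (S : Finset (Fin (n + k))) (hS : S.card = n), (∑ i ∈ S, (i : ℕ)) = m →
      ((Equiv.Perm.sign (permS S hS) : ℤ) : ℝ) =
      (-1 : ℝ) ^ ((∑ i ∈ S, (i : ℕ)) + ∑ i : Fin n, (i : ℕ)) by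
    exact H _ S hS rfl
  intro m
  induction m using Nat.strong_induction_on with
  | _ m ih =>
  intro S hS hm
  by_cases hex : ∃ s, s ∈ S ∧ ∃ t : Fin (n + k), (t : ℕ) + 1 = (s : ℕ) ∧ t ∉ S
  · obtain ⟨s, hsS, t, hts, htS⟩ := hex
    have hts_ne : t ≠ s := by
      intro h; rw [h] at hts; omega
    set S' := insert t (S.erase s) with hS'def
    have hsS' : s ∉ S' := by
      simp only [hS'def, Finset.mem_insert, Finset.mem_erase]
      push_neg
      exact ⟨hts_ne.symm, fun h => absurd rfl h⟩
    have htS' : t ∈ S' := Finset.mem_insert_self _ _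
    have hS' : S'.card = n := by
      rw [hS'def, Finset.card_insert_of_notMem (by simp [Finset.mem_erase, htS]),
        Finset.card_erase_of_mem hsS, hS]
      have : 0 < n := by rw [← hS]; exact Finset.card_pos.mpr ⟨s, hsS⟩
      omega
    have hsum' : (∑ i ∈ S', (i : ℕ)) = m - 1 := by
      rw [hS'def, Finset.sum_insert (by simp [Finset.mem_erase, htS])]
      have h1 : (∑ i ∈ S.erase s, (i : ℕ)) + (s : ℕ) = ∑ i ∈ S, (i : ℕ) :=
        Finset.sum_erase_add _ _ hsS
      omega
    have hm1 : 1 ≤ m := by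
      have : (s : ℕ) ≤ ∑ i ∈ S, (i : ℕ) := Finset.single_le_sum (fun i _ => Nat.zero_le _) hsS
      omega
    -- membership transfer
    have hmem : ∀ u : Fin (n + k), u ∈ S' → Equiv.swap t s u ∈ S := by
      intro u hu
      by_cases h1 : u = t
      · rw [h1, Equiv.swap_apply_left]; exact hsS
      · have h2 : u ≠ s := fun h => hsS' (h ▸ hu)
        rw [Equiv.swap_apply_of_ne_of_ne h1 h2]
        rcases Finset.mem_insert.mp hu with h | h
        · exact absurd h h1
        · exact Finset.mem_of_mem_erase h
    have hmono : StrictMono (fun i => Equiv.swap t s (S'.orderEmbOfFin hS' i)) := by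
      intro a b hab
      have h1 := (S'.orderEmbOfFin hS').strictMono hab
      set u := S'.orderEmbOfFin hS' a
      set u' := S'.orderEmbOfFin hS' b
      have hu : u ∈ S' := Finset.orderEmbOfFin_mem _ _ _
      have hu' : u' ∈ S' := Finset.orderEmbOfFin_mem _ _ _
      have hus : u ≠ s := fun h => hsS' (h ▸ hu)
      have hu's : u' ≠ s := fun h => hsS' (h ▸ hu')
      show Equiv.swap t s u < Equiv.swap t s u'
      by_cases h2 : u = t
      · rw [h2, Equiv.swap_apply_left]
        have h3 : u' ≠ t := fun h => (lt_irrefl _ (h ▸ h2 ▸ h1))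
        rw [Equiv.swap_apply_of_ne_of_ne h3 hu's]
        rw [Fin.lt_def]
        have : (u : ℕ) < (u' : ℕ) := h1
        have h4 : (u' : ℕ) ≠ (s : ℕ) := fun h => hu's (Fin.ext h)
        rw [h2] at this
        omega
      · by_cases h3 : u' = t
        · rw [h3, Equiv.swap_apply_left, Equiv.swap_apply_of_ne_of_ne h2 hus]
          rw [Fin.lt_def]
          have : (u : ℕ) < (u' : ℕ) := h1
          rw [h3] at this
          omega
        · rw [Equiv.swap_apply_of_ne_of_ne h2 hus, Equiv.swap_apply_of_ne_of_ne h3 hu's]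
          exact h1
    have hefS : (fun i => Equiv.swap t s (S'.orderEmbOfFin hS' i)) = S.orderEmbOfFin hS :=
      Finset.orderEmbOfFin_unique hS
        (fun i => hmem _ (Finset.orderEmbOfFin_mem _ _ _)) hmono
    -- complement membership transfer
    have hmemc : ∀ u : Fin (n + k), u ∈ S'ᶜ → Equiv.swap t s u ∈ Sᶜ := by
      intro u hu
      rw [Finset.mem_compl] at hu ⊢
      by_cases h1 : u = s
      · rw [h1, Equiv.swap_apply_right]; exact htS
      · have h2 : u ≠ t := fun h => hu (h ▸ htS')
        rw [Equiv.swap_apply_of_ne_of_ne h2 h1]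
        intro huS
        exact hu (Finset.mem_insert_of_mem (Finset.mem_erase.mpr ⟨h1, huS⟩))
    have hmonoc : StrictMono (fun j => Equiv.swap t s (S'ᶜ.orderEmbOfFin (compl_card S' hS') j)) := by
      intro a b hab
      have h1 := (S'ᶜ.orderEmbOfFin (compl_card S' hS')).strictMono hab
      set u := S'ᶜ.orderEmbOfFin (compl_card S' hS') a
      set u' := S'ᶜ.orderEmbOfFin (compl_card S' hS') b
      have hu : u ∈ S'ᶜ := Finset.orderEmbOfFin_mem _ _ _
      have hu' : u' ∈ S'ᶜ := Finset.orderEmbOfFin_mem _ _ _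
      have hut : u ≠ t := fun h => (Finset.mem_compl.mp hu) (h ▸ htS')
      have hu't : u' ≠ t := fun h => (Finset.mem_compl.mp hu') (h ▸ htS')
      show Equiv.swap t s u < Equiv.swap t s u'
      by_cases h2 : u = s
      · rw [h2, Equiv.swap_apply_right]
        have h3 : u' ≠ s := fun h => (lt_irrefl _ (h ▸ h2 ▸ h1))
        rw [Equiv.swap_apply_of_ne_of_ne hu't h3]
        rw [Fin.lt_def]
        have h5 : (u : ℕ) < (u' : ℕ) := h1
        have h4 : (u' : ℕ) ≠ (t : ℕ) := fun h => hu't (Fin.ext h)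
        rw [h2] at h5
        omega
      · by_cases h3 : u' = s
        · rw [h3, Equiv.swap_apply_right, Equiv.swap_apply_of_ne_of_ne hut h2]
          rw [Fin.lt_def]
          have h5 : (u : ℕ) < (u' : ℕ) := h1
          have h4 : (u : ℕ) ≠ (t : ℕ) := fun h => hut (Fin.ext h)
          rw [h3] at h5
          omega
        · rw [Equiv.swap_apply_of_ne_of_ne hut h2, Equiv.swap_apply_of_ne_of_ne hu't h3]
          exact h1
    have hefSc : (fun j => Equiv.swap t s (S'ᶜ.orderEmbOfFin (compl_card S' hS') j)) =
        Sᶜ.orderEmbOfFin (compl_card S hS) :=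
      Finset.orderEmbOfFin_unique (compl_card S hS)
        (fun j => hmemc _ (Finset.orderEmbOfFin_mem _ _ _)) hmonoc
    have hperm : permS S hS = Equiv.swap t s * permS S' hS' := by
      apply Equiv.ext
      intro r
      obtain ⟨d, rfl⟩ := finSumFinEquiv.surjective r
      cases d with
      | inl i =>
        rw [permS_apply_inl, Equiv.Perm.mul_apply, permS_apply_inl, ← hefS]
      | inr j =>
        rw [permS_apply_inr, Equiv.Perm.mul_apply, permS_apply_inr, ← hefSc]
    have hih := ih (m - 1) (by omega) S' hS' hsum'
    rw [hperm, Equiv.Perm.sign_mul, Equiv.Perm.sign_swap hts_ne]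
    push_cast
    rw [hih, hsum', hm]
    have : m + ∑ i : Fin n, (i : ℕ) = (m - 1 + ∑ i : Fin n, (i : ℕ)) + 1 := by omega
    rw [this, pow_succ]
    ring
  · -- base case: S is the initial segment
    have hdc : ∀ d : ℕ, ∀ s : Fin (n + k), s ∈ S → ∀ (h : d ≤ (s : ℕ)),
        (⟨(s : ℕ) - d, by omega⟩ : Fin (n + k)) ∈ S := by
      intro d
      induction d with
      | zero => intro s hs _; simpa using hs
      | succ d ihd =>
        intro s hs h
        have h1 := ihd s hs (by omega)
        by_contra h3
        refine hex ⟨_, h1, ⟨(s : ℕ) - (d + 1), by omega⟩, ?_, h3⟩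
        simp only
        omega
    have hsub : ∀ s : Fin (n + k), s ∈ S → (s : ℕ) < n := by
      intro s hs
      by_contra h
      push_neg at h
      have hIic : Finset.Iic s ⊆ S := by
        intro u hu
        have hu0 : u ≤ s := Finset.mem_Iic.mp hu
        have hu1 : (u : ℕ) ≤ (s : ℕ) := hu0
        have := hdc ((s : ℕ) - (u : ℕ)) s hs (by omega)
        convert this using 2
        omega
      have := Finset.card_le_card hIic
      rw [Fin.card_Iic, hS] at this
      omega
    have hT : S = Finset.image (Fin.castAdd k) Finset.univ := by
      apply Finset.eq_of_subset_of_card_le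
      · intro s hs
        rw [Finset.mem_image]
        exact ⟨⟨(s : ℕ), hsub s hs⟩, Finset.mem_univ _, by ext; simp⟩
      · rw [Finset.card_image_of_injective _ (Fin.castAdd_injective _ _), hS]
        simp
    subst hT
    have hembS : (fun i : Fin n => Fin.castAdd k i) =
        (Finset.image (Fin.castAdd k) Finset.univ).orderEmbOfFin hS := by
      apply Finset.orderEmbOfFin_unique
      · intro i; exact Finset.mem_image_of_mem _ (Finset.mem_univ _)
      · intro a b hab; exact hab
    have hembSc : (fun j : Fin k => Fin.natAdd n j) =
        (Finset.image (Fin.castAdd k) Finset.univ)ᶜ.orderEmbOfFin (compl_card _ hS) := by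
      apply Finset.orderEmbOfFin_unique
      · intro j
        rw [Finset.mem_compl, Finset.mem_image]
        rintro ⟨i, _, hi⟩
        have h6 := congrArg Fin.val hi
        simp at h6
        omega
      · intro a b hab
        simp only [Fin.lt_def, Fin.coe_natAdd]
        omega
    have hperm1 : permS _ hS = 1 := by
      apply Equiv.ext
      intro r
      obtain ⟨d, rfl⟩ := finSumFinEquiv.surjective r
      cases d with
      | inl i =>
        rw [permS_apply_inl, ← hembS, Equiv.Perm.one_apply, finSumFinEquiv_apply_left]
      | inr j =>
        rw [permS_apply_inr, ← hembSc, Equiv.Perm.one_apply, finSumFinEquiv_apply_right]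
    rw [hperm1]
    have hsum : (∑ i ∈ Finset.image (fun i : Fin n => Fin.castAdd k i) Finset.univ, (i : ℕ)) =
        ∑ i : Fin n, (i : ℕ) := by
      rw [Finset.sum_image (fun a _ b _ h => Fin.castAdd_injective _ _ h)]
      rfl
    rw [hsum]
    rw [Equiv.Perm.sign_one]
    rw [← two_mul]
    simp [pow_mul]


lemma image_orderEmbOfFin {N m : ℕ} (S : Finset (Fin N)) (hS : S.card = m) :
    Finset.image (⇑(S.orderEmbOfFin hS)) Finset.univ = S := by
  apply Finset.eq_of_subset_of_card_le
  · intro u hu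
    obtain ⟨i, _, rfl⟩ := Finset.mem_image.mp hu
    exact Finset.orderEmbOfFin_mem S hS i
  · rw [Finset.card_image_of_injective _ (S.orderEmbOfFin hS).injective, hS]
    simp

lemma laplace {n k : ℕ} (M : Matrix (Fin (n + k)) (Fin (n + k)) ℝ) :
    M.det = ∑ S : {S : Finset (Fin (n + k)) // S.card = n},
      ((Equiv.Perm.sign (permS S.1 S.2) : ℤ) : ℝ) *
      ((Matrix.of fun i i' : Fin n =>
          M (S.1.orderEmbOfFin S.2 i) (finSumFinEquiv (Sum.inl i'))).det *
       (Matrix.of fun j j' : Fin k =>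
          M (S.1ᶜ.orderEmbOfFin (compl_card S.1 S.2) j) (finSumFinEquiv (Sum.inr j'))).det) := by
  classical
  set e₀ := (finSumFinEquiv : Fin n ⊕ Fin k ≃ Fin (n + k)) with he₀
  -- the global parametrization
  set Ψ : ({S : Finset (Fin (n + k)) // S.card = n} × (Equiv.Perm (Fin n) × Equiv.Perm (Fin k)))
      → Equiv.Perm (Fin (n + k)) :=
    fun q => permS q.1.1 q.1.2 * (e₀.permCongr (Equiv.sumCongr q.2.1 q.2.2)) with hΨ
  have happly_inl : ∀ q (i : Fin n),
      Ψ q (e₀ (Sum.inl i)) = q.1.1.orderEmbOfFin q.1.2 (q.2.1 i) := by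
    intro q i
    simp only [hΨ, Equiv.Perm.mul_apply, Equiv.permCongr_apply, Equiv.symm_apply_apply,
      Equiv.sumCongr_apply, Sum.map_inl]
    exact permS_apply_inl _ _ _
  have happly_inr : ∀ q (j : Fin k),
      Ψ q (e₀ (Sum.inr j)) = q.1.1ᶜ.orderEmbOfFin (compl_card q.1.1 q.1.2) (q.2.2 j) := by
    intro q j
    simp only [hΨ, Equiv.Perm.mul_apply, Equiv.permCongr_apply, Equiv.symm_apply_apply,
      Equiv.sumCongr_apply, Sum.map_inr]
    exact permS_apply_inr _ _ _
  have himage : ∀ q, Finset.image (fun i : Fin n => Ψ q (e₀ (Sum.inl i))) Finset.univ = q.1.1 := by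
    intro q
    have : (fun i : Fin n => Ψ q (e₀ (Sum.inl i))) =
        (⇑(q.1.1.orderEmbOfFin q.1.2)) ∘ ⇑q.2.1 := by
      funext i; exact happly_inl q i
    rw [this, ← Finset.image_image]
    rw [Finset.image_univ_equiv]
    exact image_orderEmbOfFin _ _
  have hinj : Function.Injective Ψ := by
    intro q q' h
    have hS : q.1 = q'.1 := by
      apply Subtype.ext
      rw [← himage q, ← himage q', h]
    obtain ⟨⟨S, hS1⟩, p⟩ := q
    obtain ⟨⟨S', hS1'⟩, p'⟩ := q'
    cases hS
    simp only [hΨ] at h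
    have h2 := mul_left_cancel h
    have h3 := e₀.permCongr.injective h2
    have hα : p.1 = p'.1 := by
      apply Equiv.ext; intro i
      have := congrArg (fun (e : Equiv (Fin n ⊕ Fin k) (Fin n ⊕ Fin k)) => e (Sum.inl i)) h3
      simpa using this
    have hβ : p.2 = p'.2 := by
      apply Equiv.ext; intro j
      have := congrArg (fun (e : Equiv (Fin n ⊕ Fin k) (Fin n ⊕ Fin k)) => e (Sum.inr j)) h3
      simpa using this
    rw [Prod.ext_iff]
    exact ⟨rfl, Prod.ext hα hβ⟩
  have hbij : Function.Bijective Ψ := by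
    rw [Fintype.bijective_iff_injective_and_card]
    refine ⟨hinj, ?_⟩
    rw [Fintype.card_prod, Fintype.card_prod, Fintype.card_perm, Fintype.card_perm,
      Fintype.card_perm]
    rw [Fintype.card_subtype]
    have hfil : (Finset.univ.filter fun S : Finset (Fin (n + k)) => S.card = n) =
        Finset.powersetCard n Finset.univ := by
      ext S
      simp [Finset.mem_powersetCard]
    rw [hfil, Finset.card_powersetCard]
    simp only [Finset.card_univ, Fintype.card_fin]
    have := Nat.choose_mul_factorial_mul_factorial (Nat.le_add_right n k)
    rw [Nat.add_sub_cancel_left] at this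
    calc ((n + k).choose n) * (Nat.factorial n * Nat.factorial k)
        = (n + k).choose n * Nat.factorial n * Nat.factorial k := by ring
      _ = (n + k).factorial := this
  rw [Matrix.det_apply']
  rw [← Function.Bijective.sum_comp hbij (fun σ => Equiv.Perm.sign σ * ∏ i, M (σ i) i)]
  rw [Fintype.sum_prod_type]
  apply Fintype.sum_congr
  intro S
  have hsign : ∀ (α : Equiv.Perm (Fin n)) (β : Equiv.Perm (Fin k)),
      ((Equiv.Perm.sign (Ψ (S, α, β)) : ℤ) : ℝ) =
      ((Equiv.Perm.sign (permS S.1 S.2) : ℤ) : ℝ) *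
        (((Equiv.Perm.sign α : ℤ) : ℝ) * ((Equiv.Perm.sign β : ℤ) : ℝ)) := by
    intro α β
    simp only [hΨ]
    rw [Equiv.Perm.sign_mul, Equiv.Perm.sign_permCongr, Equiv.Perm.sign_sumCongr]
    push_cast
    ring
  have hprod : ∀ (α : Equiv.Perm (Fin n)) (β : Equiv.Perm (Fin k)),
      (∏ c, M (Ψ (S, α, β) c) c) =
      (∏ i : Fin n, M (S.1.orderEmbOfFin S.2 (α i)) (e₀ (Sum.inl i))) *
      ∏ j : Fin k, M (S.1ᶜ.orderEmbOfFin (compl_card S.1 S.2) (β j)) (e₀ (Sum.inr j)) := by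
    intro α β
    rw [← Equiv.prod_comp e₀ (fun c => M (Ψ (S, α, β) c) c), Fintype.prod_sum_type]
    congr 1
    · exact Finset.prod_congr rfl fun i _ => by rw [happly_inl]
    · exact Finset.prod_congr rfl fun j _ => by rw [happly_inr]
  conv_rhs => rw [Matrix.det_apply', Matrix.det_apply', Finset.sum_mul_sum]
  rw [Finset.mul_sum, Fintype.sum_prod_type]
  apply Fintype.sum_congr
  intro α
  rw [Finset.mul_sum]
  apply Fintype.sum_congr
  intro β
  rw [hsign α β, hprod α β]
  simp only [Matrix.of_apply]
  ring


noncomputable def bigM (n k : ℕ) (x : Fin n → ℝ) (y : Fin k → ℝ) :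
    Matrix (Fin (n + k)) (Fin (n + k)) ℝ :=
  Matrix.of fun r c => Sum.elim (fun j => x j ^ (r : ℕ))
    (fun j => (-y j) ^ (n + k - 1 - (r : ℕ))) (finSumFinEquiv.symm c)

lemma prod_Ioi_split {n k : ℕ} (F : Fin (n + k) → Fin (n + k) → ℝ) :
    (∏ c, ∏ c' ∈ Finset.Ioi c, F c c') =
      ((∏ i : Fin n, ∏ i' ∈ Finset.Ioi i,
          F (finSumFinEquiv (Sum.inl i)) (finSumFinEquiv (Sum.inl i'))) *
       ∏ j : Fin k, ∏ j' ∈ Finset.Ioi j,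
          F (finSumFinEquiv (Sum.inr j)) (finSumFinEquiv (Sum.inr j'))) *
      ∏ i : Fin n, ∏ j : Fin k, F (finSumFinEquiv (Sum.inl i)) (finSumFinEquiv (Sum.inr j)) := by
  classical
  have hIoi : ∀ (m : ℕ) (c : Fin m) (G : Fin m → ℝ),
      (∏ c' ∈ Finset.Ioi c, G c') = ∏ c' : Fin m, if c < c' then G c' else 1 := by
    intro m c G
    rw [← Finset.prod_filter]
    congr 1
    ext u
    simp
  calc (∏ c, ∏ c' ∈ Finset.Ioi c, F c c')
      = ∏ c, ∏ c' : Fin (n + k), if c < c' then F c c' else 1 :=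
        Fintype.prod_congr _ _ fun c => hIoi _ c _
    _ = ∏ d : Fin n ⊕ Fin k, ∏ d' : Fin n ⊕ Fin k,
          if finSumFinEquiv d < finSumFinEquiv d' then F (finSumFinEquiv d) (finSumFinEquiv d')
          else 1 := by
        rw [← Equiv.prod_comp finSumFinEquiv
          (fun c => ∏ c' : Fin (n + k), if c < c' then F c c' else 1)]
        refine Fintype.prod_congr _ _ fun d => ?_
        rw [← Equiv.prod_comp finSumFinEquiv
          (fun c' => if finSumFinEquiv d < c' then F (finSumFinEquiv d) c' else 1)]
    _ = _ := by
        rw [Fintype.prod_sum_type]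
        have hinner : ∀ d : Fin n ⊕ Fin k,
            (∏ d' : Fin n ⊕ Fin k, (if finSumFinEquiv d < finSumFinEquiv d'
              then F (finSumFinEquiv d) (finSumFinEquiv d') else 1)) =
            (∏ i' : Fin n, (if finSumFinEquiv d < finSumFinEquiv (Sum.inl i')
              then F (finSumFinEquiv d) (finSumFinEquiv (Sum.inl i')) else 1)) *
            ∏ j' : Fin k, (if finSumFinEquiv d < finSumFinEquiv (Sum.inr j')
              then F (finSumFinEquiv d) (finSumFinEquiv (Sum.inr j')) else 1) := by
          intro d
          exact Fintype.prod_sum_type _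
        rw [Finset.prod_congr rfl (fun d _ => hinner (Sum.inl d)),
          Finset.prod_congr rfl (fun d _ => hinner (Sum.inr d)),
          Finset.prod_mul_distrib, Finset.prod_mul_distrib]
        have hLL : ∀ i : Fin n, (∏ i' : Fin n, (if (finSumFinEquiv (Sum.inl i) : Fin (n + k)) <
            finSumFinEquiv (Sum.inl i') then F (finSumFinEquiv (Sum.inl i))
            (finSumFinEquiv (Sum.inl i')) else 1)) =
            ∏ i' ∈ Finset.Ioi i, F (finSumFinEquiv (Sum.inl i)) (finSumFinEquiv (Sum.inl i')) := by
          intro i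
          rw [hIoi]
          refine Fintype.prod_congr _ _ fun i' => if_congr ?_ rfl rfl
          simp only [Fin.lt_def, finSumFinEquiv_apply_left, Fin.coe_castAdd]
        have hRR : ∀ j : Fin k, (∏ j' : Fin k, (if (finSumFinEquiv (Sum.inr j) : Fin (n + k)) <
            finSumFinEquiv (Sum.inr j') then F (finSumFinEquiv (Sum.inr j))
            (finSumFinEquiv (Sum.inr j')) else 1)) =
            ∏ j' ∈ Finset.Ioi j, F (finSumFinEquiv (Sum.inr j)) (finSumFinEquiv (Sum.inr j')) := by
          intro j
          rw [hIoi]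
          refine Fintype.prod_congr _ _ fun j' => ?_
          refine if_congr ?_ rfl rfl
          simp only [Fin.lt_def, finSumFinEquiv_apply_right, Fin.coe_natAdd]
          omega
        have hLR : ∀ i : Fin n, (∏ j' : Fin k, (if (finSumFinEquiv (Sum.inl i) : Fin (n + k)) <
            finSumFinEquiv (Sum.inr j') then F (finSumFinEquiv (Sum.inl i))
            (finSumFinEquiv (Sum.inr j')) else 1)) =
            ∏ j' : Fin k, F (finSumFinEquiv (Sum.inl i)) (finSumFinEquiv (Sum.inr j')) := by
          intro i
          refine Fintype.prod_congr _ _ fun j' => ?_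
          rw [if_pos]
          rw [Fin.lt_def]
          simp only [finSumFinEquiv_apply_left, finSumFinEquiv_apply_right, Fin.coe_castAdd,
            Fin.coe_natAdd]
          have := i.isLt
          omega
        have hRL : ∀ j : Fin k, (∏ i' : Fin n, (if (finSumFinEquiv (Sum.inr j) : Fin (n + k)) <
            finSumFinEquiv (Sum.inl i') then F (finSumFinEquiv (Sum.inr j))
            (finSumFinEquiv (Sum.inl i')) else 1)) = 1 := by
          intro j
          rw [Finset.prod_eq_one]
          intro i' _
          rw [if_neg]
          rw [Fin.lt_def]
          simp only [finSumFinEquiv_apply_left, finSumFinEquiv_apply_right, Fin.coe_castAdd,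
            Fin.coe_natAdd]
          have := i'.isLt
          omega
        rw [Finset.prod_congr rfl (fun i _ => hLL i), Finset.prod_congr rfl (fun i _ => hLR i),
          Finset.prod_congr rfl (fun j _ => hRL j), Finset.prod_congr rfl (fun j _ => hRR j)]
        rw [Finset.prod_const_one]
        ring

lemma det_bigM_core {n k : ℕ} (x : Fin n → ℝ) (y : Fin k → ℝ) (hy : ∀ j, y j ≠ 0) :
    (bigM n k x y).det =
      (∏ i, ∏ i' ∈ Finset.Ioi i, (x i' - x i)) * (∏ j, ∏ j' ∈ Finset.Ioi j, (y j' - y j)) *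
        ∏ i, ∏ j, (1 + x i * y j) := by
  classical
  set z : Fin (n + k) → ℝ := fun c => Sum.elim x (fun j => -(y j)⁻¹) (finSumFinEquiv.symm c)
    with hz
  set w : Fin (n + k) → ℝ := fun c =>
    Sum.elim (fun _ => (1 : ℝ)) (fun j => (-y j) ^ (n + k - 1)) (finSumFinEquiv.symm c) with hw
  have hM : bigM n k x y = Matrix.of (fun r c => w c * ((Matrix.vandermonde z)ᵀ) r c) := by
    ext r c
    obtain ⟨d, rfl⟩ := finSumFinEquiv.surjective c
    cases d with
    | inl i =>
      simp [bigM, hz, hw, Matrix.vandermonde]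
    | inr j =>
      simp only [bigM, hz, hw, Matrix.of_apply, Equiv.symm_apply_apply, Sum.elim_inr,
        Matrix.transpose_apply, Matrix.vandermonde_apply]
      have hr : (r : ℕ) ≤ n + k - 1 := by have := r.isLt; omega
      have hyj : (-y j) ≠ 0 := neg_ne_zero.mpr (hy j)
      rw [neg_inv, inv_pow, pow_sub₀ _ hyj hr]
  rw [hM]
  rw [Matrix.det_mul_row w]
  rw [Matrix.det_transpose, Matrix.det_vandermonde]
  -- compute ∏ w
  have hprodw : (∏ c, w c) = ∏ j : Fin k, (-y j) ^ (n + k - 1) := by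
    rw [← Equiv.prod_comp finSumFinEquiv w, Fintype.prod_sum_type]
    simp [hw]
  -- split the vandermonde product
  have hsplit := prod_Ioi_split (fun c c' => z c' - z c)
  rw [hsplit, hprodw]
  have hzl : ∀ i : Fin n, z (finSumFinEquiv (Sum.inl i)) = x i := by
    intro i; simp [hz]
  have hzr : ∀ j : Fin k, z (finSumFinEquiv (Sum.inr j)) = -(y j)⁻¹ := by
    intro j; simp [hz]
  have hLL : (∏ i : Fin n, ∏ i' ∈ Finset.Ioi i,
      (z (finSumFinEquiv (Sum.inl i')) - z (finSumFinEquiv (Sum.inl i)))) =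
      ∏ i, ∏ i' ∈ Finset.Ioi i, (x i' - x i) := by
    refine Finset.prod_congr rfl fun i _ => Finset.prod_congr rfl fun i' _ => by
      rw [hzl, hzl]
  -- per-j split of the power
  have hpow : ∀ j : Fin k, (-y j) ^ (n + k - 1) =
      (-y j) ^ n * ((-y j) ^ ((Finset.Ioi j).card) * (-y j) ^ ((Finset.Iio j).card)) := by
    intro j
    rw [← pow_add, ← pow_add]
    congr 1
    rw [Fin.card_Ioi, Fin.card_Iio]
    have := j.isLt
    omega
  rw [Finset.prod_congr rfl fun j _ => hpow j, Finset.prod_mul_distrib,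
    Finset.prod_mul_distrib]
  -- the Iio part gets swapped to Ioi
  have hswap : (∏ j : Fin k, (-y j) ^ (Finset.Iio j).card) =
      ∏ j : Fin k, ∏ j' ∈ Finset.Ioi j, (-y j') := by
    calc (∏ j : Fin k, (-y j) ^ (Finset.Iio j).card)
        = ∏ j : Fin k, ∏ _j' ∈ Finset.Iio j, (-y j) := by
          refine Finset.prod_congr rfl fun j _ => ?_
          rw [Finset.prod_const]
      _ = ∏ j' : Fin k, ∏ j ∈ Finset.Ioi j', (-y j) := by
          refine Finset.prod_comm' ?_
          intro a b
          simp only [Finset.mem_univ, true_and, Finset.mem_Iio, Finset.mem_Ioi, and_true]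
      _ = _ := rfl
  have hIoiConst : (∏ j : Fin k, (-y j) ^ (Finset.Ioi j).card) =
      ∏ j : Fin k, ∏ _j' ∈ Finset.Ioi j, (-y j) := by
    refine Finset.prod_congr rfl fun j _ => (Finset.prod_const _).symm
  rw [hswap, hIoiConst]
  -- now everything is per-pair; combine
  have hRR : (∏ j : Fin k, ∏ j' ∈ Finset.Ioi j,
        (z (finSumFinEquiv (Sum.inr j')) - z (finSumFinEquiv (Sum.inr j)))) *
      ((∏ j : Fin k, ∏ _j' ∈ Finset.Ioi j, (-y j)) *
       ∏ j : Fin k, ∏ j' ∈ Finset.Ioi j, (-y j')) =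
      ∏ j, ∏ j' ∈ Finset.Ioi j, (y j' - y j) := by
    rw [← Finset.prod_mul_distrib, ← Finset.prod_mul_distrib]
    refine Finset.prod_congr rfl fun j _ => ?_
    rw [← Finset.prod_mul_distrib, ← Finset.prod_mul_distrib]
    refine Finset.prod_congr rfl fun j' _ => ?_
    rw [hzr, hzr]
    have e1 : y j ≠ 0 := hy j
    have e2 : y j' ≠ 0 := hy j'
    field_simp
    ring
  have hLR : (∏ i : Fin n, ∏ j : Fin k,
        (z (finSumFinEquiv (Sum.inr j)) - z (finSumFinEquiv (Sum.inl i)))) *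
      (∏ j : Fin k, (-y j) ^ n) =
      ∏ i, ∏ j, (1 + x i * y j) := by
    have h1 : (∏ j : Fin k, (-y j) ^ n) = ∏ i : Fin n, ∏ j : Fin k, (-y j) := by
      rw [Finset.prod_comm]
      refine Finset.prod_congr rfl fun j _ => ?_
      rw [Finset.prod_const]
      congr 1
      simp
    rw [h1, ← Finset.prod_mul_distrib]
    refine Finset.prod_congr rfl fun i _ => ?_
    rw [← Finset.prod_mul_distrib]
    refine Finset.prod_congr rfl fun j _ => ?_
    rw [hzr, hzl]
    have e1 : y j ≠ 0 := hy j
    field_simp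
    ring
  calc ((∏ j : Fin k, (-y j) ^ n) * ((∏ j : Fin k, ∏ _j' ∈ Finset.Ioi j, (-y j)) *
          ∏ j : Fin k, ∏ j' ∈ Finset.Ioi j, (-y j'))) *
        (((∏ i : Fin n, ∏ i' ∈ Finset.Ioi i,
            (z (finSumFinEquiv (Sum.inl i')) - z (finSumFinEquiv (Sum.inl i)))) *
          ∏ j : Fin k, ∏ j' ∈ Finset.Ioi j,
            (z (finSumFinEquiv (Sum.inr j')) - z (finSumFinEquiv (Sum.inr j)))) *
          ∏ i : Fin n, ∏ j : Fin k,
            (z (finSumFinEquiv (Sum.inr j)) - z (finSumFinEquiv (Sum.inl i))))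
      = ((∏ i : Fin n, ∏ i' ∈ Finset.Ioi i,
            (z (finSumFinEquiv (Sum.inl i')) - z (finSumFinEquiv (Sum.inl i))))) *
        (((∏ j : Fin k, ∏ j' ∈ Finset.Ioi j,
            (z (finSumFinEquiv (Sum.inr j')) - z (finSumFinEquiv (Sum.inr j)))) *
          ((∏ j : Fin k, ∏ _j' ∈ Finset.Ioi j, (-y j)) *
           ∏ j : Fin k, ∏ j' ∈ Finset.Ioi j, (-y j'))) *
         ((∏ i : Fin n, ∏ j : Fin k,
            (z (finSumFinEquiv (Sum.inr j)) - z (finSumFinEquiv (Sum.inl i)))) *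
          (∏ j : Fin k, (-y j) ^ n))) := by ring
    _ = _ := by rw [hLL, hRR, hLR]; ring

lemma det_bigM {n k : ℕ} (x : Fin n → ℝ) (y : Fin k → ℝ) :
    (bigM n k x y).det =
      (∏ i, ∏ i' ∈ Finset.Ioi i, (x i' - x i)) * (∏ j, ∏ j' ∈ Finset.Ioi j, (y j' - y j)) *
        ∏ i, ∏ j, (1 + x i * y j) := by
  classical
  set fL : ℝ → ℝ := fun t => (bigM n k x (fun j => y j + t)).det with hfL
  set fR : ℝ → ℝ := fun t =>
    (∏ i, ∏ i' ∈ Finset.Ioi i, (x i' - x i)) *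
      (∏ j, ∏ j' ∈ Finset.Ioi j, ((y j' + t) - (y j + t))) *
      ∏ i, ∏ j, (1 + x i * (y j + t)) with hfR
  have hcontL : Continuous fL := by
    apply Continuous.matrix_det
    apply continuous_matrix
    intro r c
    simp only [bigM, Matrix.of_apply]
    cases finSumFinEquiv.symm c with
    | inl i => simpa using continuous_const
    | inr j =>
      simp only [Sum.elim_inr]
      fun_prop
  have hcontR : Continuous fR := by
    apply Continuous.mul
    apply Continuous.mul
    · exact continuous_const
    · apply continuous_finset_prod
      intro j _
      apply continuous_finset_prod
      intro j' _
      fun_prop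
    · apply continuous_finset_prod
      intro i _
      apply continuous_finset_prod
      intro j _
      fun_prop
  have hdense : Dense (Set.range (fun j : Fin k => -(y j)))ᶜ :=
    Set.Countable.dense_compl ℝ ((Set.finite_range _).countable)
  have hEqOn : Set.EqOn fL fR (Set.range (fun j : Fin k => -(y j)))ᶜ := by
    intro t ht
    have hne : ∀ j, y j + t ≠ 0 := by
      intro j h
      have h2 : -(y j) = t := by linarith
      exact ht ⟨j, h2⟩
    exact det_bigM_core x (fun j => y j + t) hne
  have hfun : fL = fR := Continuous.ext_on hdense hcontL hcontR hEqOn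
  have h0 := congrFun hfun 0
  simp only [hfL, hfR] at h0
  simpa using h0


noncomputable def conj' (n k : ℕ) (lam : Fin n → ℕ) (j : Fin k) : ℕ :=
  (Finset.univ.filter (fun i : Fin n => (j : ℕ) < lam i)).card

def aF {n k : ℕ} (f : Fin n → Fin (k + 1)) : Fin n → Fin (n + k) := fun i =>
  ⟨(f i : ℕ) + (n - 1 - (i : ℕ)), by have h1 := (f i).isLt; have h2 := i.isLt; omega⟩

lemma conj'_le {n k : ℕ} (lam : Fin n → ℕ) (j : Fin k) : conj' n k lam j ≤ n := by
  refine (Finset.card_filter_le _ _).trans ?_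
  simp

noncomputable def cF {n k : ℕ} (f : Fin n → Fin (k + 1)) : Fin k → Fin (n + k) := fun j =>
  ⟨n + (j : ℕ) - conj' n k (fun i => (f i : ℕ)) j, by have := j.isLt; omega⟩

lemma aF_strictAnti {n k : ℕ} {f : Fin n → Fin (k + 1)}
    (hf : Antitone fun i => ((f i : ℕ))) : StrictAnti (aF f) := by
  intro i i' hii'
  have h1 : (f i' : ℕ) ≤ (f i : ℕ) := hf (le_of_lt hii')
  have h2 : (i : ℕ) < (i' : ℕ) := hii'
  have h3 := i'.isLt
  rw [Fin.lt_def]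
  simp only [aF]
  omega

lemma SF_card {n k : ℕ} {f : Fin n → Fin (k + 1)} (hf : Antitone fun i => ((f i : ℕ))) :
    (Finset.image (aF f) Finset.univ).card = n := by
  rw [Finset.card_image_of_injective _ (aF_strictAnti hf).injective]
  simp

lemma conj'_anti {n k : ℕ} (lam : Fin n → ℕ) {j j' : Fin k} (h : j ≤ j') :
    conj' n k lam j' ≤ conj' n k lam j := by
  apply Finset.card_le_card
  intro i hi
  rw [Finset.mem_filter] at hi ⊢
  refine ⟨hi.1, lt_of_le_of_lt ?_ hi.2⟩
  exact h

lemma cF_strictMono {n k : ℕ} (f : Fin n → Fin (k + 1)) : StrictMono (cF f) := by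
  intro j j' hjj'
  have h1 : conj' n k (fun i => (f i : ℕ)) j' ≤ conj' n k (fun i => (f i : ℕ)) j :=
    conj'_anti _ (le_of_lt hjj')
  have h2 : (j : ℕ) < (j' : ℕ) := hjj'
  have h3 := conj'_le (fun i => ((f i : ℕ))) j
  rw [Fin.lt_def]
  simp only [cF]
  omega

lemma conj'_lt_iff {n k : ℕ} {f : Fin n → Fin (k + 1)}
    (hf : Antitone fun i => ((f i : ℕ))) (i : Fin n) (j : Fin k) :
    ((j : ℕ) < (f i : ℕ)) ↔ (i : ℕ) < conj' n k (fun i => (f i : ℕ)) j := by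
  constructor
  · intro h
    have hsub : Finset.Iic i ⊆ Finset.univ.filter (fun i' : Fin n => (j : ℕ) < (f i' : ℕ)) := by
      intro u hu
      have hu1 : u ≤ i := Finset.mem_Iic.mp hu
      rw [Finset.mem_filter]
      exact ⟨Finset.mem_univ _, lt_of_lt_of_le h (hf hu1)⟩
    have := Finset.card_le_card hsub
    rw [Fin.card_Iic] at this
    exact this
  · intro h
    by_contra hc
    push_neg at hc
    have hsub : Finset.univ.filter (fun i' : Fin n => (j : ℕ) < (f i' : ℕ)) ⊆ Finset.Iio i := by
      intro u hu
      rw [Finset.mem_filter] at hu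
      rw [Finset.mem_Iio]
      by_contra hge
      push_neg at hge
      have : (f u : ℕ) ≤ (f i : ℕ) := hf hge
      omega
    have := Finset.card_le_card hsub
    rw [Fin.card_Iio] at this
    simp only [conj'] at h
    omega

lemma cF_not_mem {n k : ℕ} {f : Fin n → Fin (k + 1)}
    (hf : Antitone fun i => ((f i : ℕ))) (j : Fin k) :
    cF f j ∉ Finset.image (aF f) Finset.univ := by
  intro hmem
  obtain ⟨i, _, heq⟩ := Finset.mem_image.mp hmem
  have hval := congrArg Fin.val heq
  simp only [aF, cF] at hval
  have hle := conj'_le (fun i => ((f i : ℕ))) j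
  have hi := i.isLt
  have hj := j.isLt
  have hfi := (f i).isLt
  rcases lt_or_ge (j : ℕ) ((f i : ℕ)) with h | h
  · have := (conj'_lt_iff hf i j).mp h
    omega
  · have h2 : ¬ ((i : ℕ) < conj' n k (fun i => (f i : ℕ)) j) := by
      intro hcon
      have := (conj'_lt_iff hf i j).mpr hcon
      omega
    omega

lemma SFc_eq {n k : ℕ} {f : Fin n → Fin (k + 1)} (hf : Antitone fun i => ((f i : ℕ))) :
    (Finset.image (aF f) Finset.univ)ᶜ = Finset.image (cF f) Finset.univ := by
  symm
  apply Finset.eq_of_subset_of_card_le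
  · intro u hu
    obtain ⟨j, _, rfl⟩ := Finset.mem_image.mp hu
    exact Finset.mem_compl.mpr (cF_not_mem hf j)
  · rw [Finset.card_compl, SF_card hf, Finset.card_image_of_injective _
      (cF_strictMono f).injective]
    simp

lemma embS_eq {n k : ℕ} {f : Fin n → Fin (k + 1)} (hf : Antitone fun i => ((f i : ℕ))) :
    ∀ i : Fin n, (Finset.image (aF f) Finset.univ).orderEmbOfFin (SF_card hf) i =
      aF f (Fin.rev i) := by
  intro i
  have := Finset.orderEmbOfFin_unique (SF_card hf) (f := fun i => aF f (Fin.rev i))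
    (fun i => Finset.mem_image_of_mem _ (Finset.mem_univ _))
    (fun a b hab => aF_strictAnti hf (by
      rw [Fin.lt_def, Fin.val_rev, Fin.val_rev]
      have h2 : (a : ℕ) < (b : ℕ) := hab
      have := b.isLt
      omega))
  exact (congrFun this i).symm

lemma embSc_eq {n k : ℕ} {f : Fin n → Fin (k + 1)} (hf : Antitone fun i => ((f i : ℕ)))
    (hcc : (Finset.image (aF f) Finset.univ)ᶜ.card = k) :
    ∀ j : Fin k, (Finset.image (aF f) Finset.univ)ᶜ.orderEmbOfFin hcc j = cF f j := by
  intro j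
  have := Finset.orderEmbOfFin_unique hcc (f := cF f)
    (fun j => Finset.mem_compl.mpr (cF_not_mem hf j)) (cF_strictMono f)
  exact (congrFun this j).symm

lemma conj'_sum {n k : ℕ} (f : Fin n → Fin (k + 1)) :
    (∑ j : Fin k, conj' n k (fun i => (f i : ℕ)) j) = ∑ i, (f i : ℕ) := by
  unfold conj'
  have h1 : ∀ j : Fin k, (Finset.univ.filter (fun i : Fin n => (j : ℕ) < (f i : ℕ))).card =
      ∑ i : Fin n, if (j : ℕ) < (f i : ℕ) then 1 else 0 := by
    intro j
    rw [Finset.card_filter]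
  rw [Finset.sum_congr rfl fun j _ => h1 j, Finset.sum_comm]
  refine Finset.sum_congr rfl fun i _ => ?_
  rw [← Finset.card_filter]
  -- card of {j : Fin k | j < f i} = f i
  have hfi : (f i : ℕ) ≤ k := by have := (f i).isLt; omega
  apply Finset.card_eq_of_bijective (fun m hm => ⟨m, by omega⟩)
  · intro a ha
    rw [Finset.mem_filter] at ha
    exact ⟨(a : ℕ), ha.2, by simp⟩
  · intro m hm
    rw [Finset.mem_filter]
    exact ⟨Finset.mem_univ _, by simpa using hm⟩
  · intro a b ha hb hab
    have := congrArg Fin.val hab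
    simpa using this

lemma neg_one_pow_congr' {a b : ℕ} (h : a % 2 = b % 2) : (-1 : ℝ) ^ a = (-1 : ℝ) ^ b := by
  have key : ∀ c : ℕ, (-1 : ℝ) ^ c = (-1 : ℝ) ^ (c % 2) := by
    intro c
    conv_lhs => rw [← Nat.div_add_mod c 2]
    rw [pow_add, pow_mul, neg_one_sq, one_pow, one_mul]
  rw [key a, key b, h]

lemma refl_sum (m : ℕ) : (∑ i : Fin m, (m - 1 - (i : ℕ))) = ∑ i : Fin m, (i : ℕ) := by
  rw [Fin.sum_univ_eq_sum_range (fun i => m - 1 - i), Fin.sum_univ_eq_sum_range (fun i => i)]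
  exact Finset.sum_range_reflect (fun i => i) m


lemma det_denom {m : ℕ} (x : Fin m → ℝ) :
    (Matrix.of fun i j : Fin m => x j ^ (m - 1 - (i : ℕ))).det =
      ((Equiv.Perm.sign (Fin.revPerm (n := m)) : ℤ) : ℝ) *
        ∏ i, ∏ j ∈ Finset.Ioi i, (x j - x i) := by
  have h : (Matrix.of fun i j : Fin m => x j ^ (m - 1 - (i : ℕ))) =
      ((Matrix.vandermonde x).submatrix id Fin.revPerm)ᵀ := by
    ext i j
    simp only [Matrix.of_apply, Matrix.transpose_apply, Matrix.submatrix_apply, id_eq,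
      Matrix.vandermonde_apply, Fin.revPerm_apply, Fin.val_rev]
    congr 1
    omega
  rw [h, Matrix.det_transpose, Matrix.det_permute', Matrix.det_vandermonde]
noncomputable def fS {n k : ℕ} (S : Finset (Fin (n + k))) (hS : S.card = n) :
    Fin n → Fin (k + 1) := fun i =>
  ⟨(S.orderEmbOfFin hS (Fin.rev i) : ℕ) - (n - 1 - (i : ℕ)), by
    have hs := (S.orderEmbOfFin hS).strictMono
    have hn : 0 < n := i.pos
    have hle : Fin.rev i ≤ (⟨n - 1, by omega⟩ : Fin n) := by
      rw [Fin.le_def, Fin.val_rev]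
      simp only
      omega
    have h1 := sm_bound hs hle
    have h2 := (S.orderEmbOfFin hS (⟨n - 1, by omega⟩ : Fin n)).isLt
    rw [Fin.val_rev] at h1
    simp only at h1
    omega⟩

lemma fS_antitone {n k : ℕ} (S : Finset (Fin (n + k))) (hS : S.card = n) :
    Antitone fun i => ((fS S hS i : ℕ)) := by
  intro i i' hii'
  have hs := (S.orderEmbOfFin hS).strictMono
  have hle : Fin.rev i' ≤ Fin.rev i := by
    rw [Fin.le_def, Fin.val_rev, Fin.val_rev]
    have h1 : (i : ℕ) ≤ (i' : ℕ) := hii'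
    have := i'.isLt
    omega
  have h1 := sm_bound hs hle
  rw [Fin.val_rev, Fin.val_rev] at h1
  simp only [fS]
  have h2 : (i : ℕ) ≤ (i' : ℕ) := hii'
  have := i'.isLt
  omega

lemma fS_aF {n k : ℕ} (S : Finset (Fin (n + k))) (hS : S.card = n) (i : Fin n) :
    aF (fS S hS) i = S.orderEmbOfFin hS (Fin.rev i) := by
  have hs := (S.orderEmbOfFin hS).strictMono
  have hn : 0 < n := i.pos
  have hge : (Fin.rev i : ℕ) ≤ (S.orderEmbOfFin hS (Fin.rev i) : ℕ) := by
    have h1 := sm_bound hs (show (⟨0, hn⟩ : Fin n) ≤ Fin.rev i from by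
      rw [Fin.le_def]; simp)
    simp only at h1
    omega
  apply Fin.ext
  simp only [aF, fS]
  rw [Fin.val_rev] at hge
  omega

lemma key_sum {n k : ℕ} (x : Fin n → ℝ) (y : Fin k → ℝ) :
    (∑ f ∈ Finset.univ.filter
        (fun f : Fin n → Fin (k + 1) => Antitone fun i => ((f i : ℕ))),
      (Matrix.of fun i j : Fin n => x j ^ ((f i : ℕ) + (n - 1 - (i : ℕ)))).det *
      (Matrix.of fun i j : Fin k =>
        y j ^ (conj' n k (fun i => (f i : ℕ)) i + (k - 1 - (i : ℕ)))).det)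
    = ((-1 : ℝ) ^ (∑ i : Fin n, (n - 1 - (i : ℕ))) *
        (-1 : ℝ) ^ (∑ j : Fin k, (k - 1 - (j : ℕ)))) * (bigM n k x y).det := by
  classical
  rw [laplace (bigM n k x y), Finset.mul_sum]
  refine Finset.sum_bij'
    (i := fun f hf => (⟨Finset.image (aF f) Finset.univ,
      SF_card ((Finset.mem_filter.mp hf).2)⟩ : {S : Finset (Fin (n + k)) // S.card = n}))
    (j := fun S _ => fS S.1 S.2) (fun f hf => Finset.mem_univ _)
    (fun S _ => Finset.mem_filter.mpr ⟨Finset.mem_univ _, fS_antitone S.1 S.2⟩)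
    ?_ ?_ ?_
  · -- left inverse : fS (image (aF f)) = f
    intro f hf
    have hf2 := (Finset.mem_filter.mp hf).2
    funext i
    apply Fin.ext
    simp only [fS]
    rw [embS_eq hf2 (Fin.rev i), Fin.rev_rev]
    simp only [aF]
    omega
  · -- right inverse : image (aF (fS S)) = S
    intro S _
    apply Subtype.ext
    simp only
    have h1 : ∀ i : Fin n, aF (fS S.1 S.2) i = S.1.orderEmbOfFin S.2 (Fin.rev i) := fS_aF S.1 S.2
    rw [show aF (fS S.1 S.2) = fun i => S.1.orderEmbOfFin S.2 (Fin.rev i) from funext h1]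
    rw [show (fun i => S.1.orderEmbOfFin S.2 (Fin.rev i)) =
      (⇑(S.1.orderEmbOfFin S.2)) ∘ ⇑(Fin.revPerm (n := n)) from rfl]
    rw [← Finset.image_image, Finset.image_univ_equiv]
    exact image_orderEmbOfFin _ _
  · -- term equality
    intro f hf
    have hf2 := (Finset.mem_filter.mp hf).2
    set S : {S : Finset (Fin (n + k)) // S.card = n} :=
      ⟨Finset.image (aF f) Finset.univ, SF_card hf2⟩ with hSdef
    -- the A block
    have hA : (Matrix.of fun i i' : Fin n =>
        bigM n k x y (S.1.orderEmbOfFin S.2 i) (finSumFinEquiv (Sum.inl i'))) =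
        (Matrix.of fun i j : Fin n =>
          x j ^ ((f i : ℕ) + (n - 1 - (i : ℕ)))).submatrix (Fin.revPerm (n := n)) id := by
      ext i i'
      simp only [Matrix.of_apply, Matrix.submatrix_apply, id_eq, Fin.revPerm_apply]
      rw [embS_eq hf2 i]
      simp only [bigM, Matrix.of_apply, Equiv.symm_apply_apply, Sum.elim_inl]
      congr 1
    have hdetA : (Matrix.of fun i i' : Fin n =>
        bigM n k x y (S.1.orderEmbOfFin S.2 i) (finSumFinEquiv (Sum.inl i'))).det =
        ((-1 : ℝ) ^ (∑ i : Fin n, (n - 1 - (i : ℕ)))) *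
          (Matrix.of fun i j : Fin n => x j ^ ((f i : ℕ) + (n - 1 - (i : ℕ)))).det := by
      rw [hA, Matrix.det_permute, ← sign_rev_real]
    -- the B block
    have hB : (Matrix.of fun j j' : Fin k =>
        bigM n k x y (S.1ᶜ.orderEmbOfFin (compl_card S.1 S.2) j) (finSumFinEquiv (Sum.inr j'))) =
        (Matrix.of fun j j' : Fin k =>
          ((-1 : ℝ) ^ (conj' n k (fun i => (f i : ℕ)) j + (k - 1 - (j : ℕ)))) *
          (y j' ^ (conj' n k (fun i => (f i : ℕ)) j + (k - 1 - (j : ℕ))))) := by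
      ext j j'
      simp only [Matrix.of_apply]
      rw [embSc_eq hf2 (compl_card S.1 S.2) j]
      simp only [bigM, Matrix.of_apply, Equiv.symm_apply_apply, Sum.elim_inr]
      rw [show (n + k - 1 - ((cF f j : Fin (n + k)) : ℕ)) =
        conj' n k (fun i => (f i : ℕ)) j + (k - 1 - (j : ℕ)) from by
          simp only [cF]
          have h1 := conj'_le (fun i => ((f i : ℕ))) j
          have h2 := j.isLt
          omega]
      rw [neg_pow]
    have hdetB : (Matrix.of fun j j' : Fin k =>
        bigM n k x y (S.1ᶜ.orderEmbOfFin (compl_card S.1 S.2) j)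
          (finSumFinEquiv (Sum.inr j'))).det =
        ((-1 : ℝ) ^ ((∑ i, (f i : ℕ)) + ∑ j : Fin k, (k - 1 - (j : ℕ)))) *
          (Matrix.of fun i j : Fin k =>
            y j ^ (conj' n k (fun i => (f i : ℕ)) i + (k - 1 - (i : ℕ)))).det := by
      rw [hB]
      rw [show (Matrix.of fun j j' : Fin k =>
          ((-1 : ℝ) ^ (conj' n k (fun i => (f i : ℕ)) j + (k - 1 - (j : ℕ)))) *
          (y j' ^ (conj' n k (fun i => (f i : ℕ)) j + (k - 1 - (j : ℕ))))) =
        (Matrix.of fun j j' : Fin k =>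
          (fun j : Fin k => ((-1 : ℝ) ^ (conj' n k (fun i => (f i : ℕ)) j + (k - 1 - (j : ℕ))))) j *
          (Matrix.of fun i j'' : Fin k =>
            y j'' ^ (conj' n k (fun i => (f i : ℕ)) i + (k - 1 - (i : ℕ)))) j j') from rfl]
      rw [Matrix.det_mul_column]
      congr 1
      rw [Finset.prod_pow_eq_pow_sum]
      congr 1
      rw [Finset.sum_add_distrib]
      congr 1
      exact conj'_sum f
    -- the sign
    have hsign : ((Equiv.Perm.sign (permS S.1 S.2) : ℤ) : ℝ) =
        (-1 : ℝ) ^ (((∑ i, (f i : ℕ)) + ∑ i : Fin n, (n - 1 - (i : ℕ))) + ∑ i : Fin n, (i : ℕ)) := by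
      rw [sign_permS S.1 S.2]
      congr 1
      have : (∑ u ∈ S.1, (u : ℕ)) = ∑ i, ((aF f i : Fin (n + k)) : ℕ) := by
        rw [hSdef]
        exact Finset.sum_image (fun a _ b _ h => (aF_strictAnti hf2).injective h)
      rw [this]
      congr 1
      rw [← Finset.sum_add_distrib]
      rfl
    rw [hdetA, hdetB, hsign]
    have hGn : (∑ i : Fin n, (n - 1 - (i : ℕ))) = ∑ i : Fin n, (i : ℕ) := refl_sum n
    set E1 := ∑ i : Fin n, (n - 1 - (i : ℕ)) with hE1
    set E2 := ∑ j : Fin k, (k - 1 - (j : ℕ)) with hE2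
    set Sf := ∑ i, (f i : ℕ) with hSf
    set NX := (Matrix.of fun i j : Fin n => x j ^ ((f i : ℕ) + (n - 1 - (i : ℕ)))).det with hNX
    set NY := (Matrix.of fun i j : Fin k =>
      y j ^ (conj' n k (fun i => (f i : ℕ)) i + (k - 1 - (i : ℕ)))).det with hNY
    have hone : (-1 : ℝ) ^ E1 * (-1 : ℝ) ^ E2 * ((-1 : ℝ) ^ ((Sf + E1) + ∑ i : Fin n, (i : ℕ)) *
        ((-1 : ℝ) ^ E1 * (-1 : ℝ) ^ (Sf + E2))) = 1 := by
      rw [← pow_add, ← pow_add, ← pow_add, ← pow_add]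
      rw [neg_one_pow_congr' (b := 0) (by omega), pow_zero]
    calc NX * NY
        = ((-1 : ℝ) ^ E1 * (-1 : ℝ) ^ E2 * ((-1 : ℝ) ^ ((Sf + E1) + ∑ i : Fin n, (i : ℕ)) *
            ((-1 : ℝ) ^ E1 * (-1 : ℝ) ^ (Sf + E2)))) * (NX * NY) := by rw [hone, one_mul]
      _ = (-1 : ℝ) ^ E1 * (-1 : ℝ) ^ E2 *
          ((-1 : ℝ) ^ ((Sf + E1) + ∑ i : Fin n, (i : ℕ)) *
            ((-1 : ℝ) ^ E1 * NX * ((-1 : ℝ) ^ (Sf + E2) * NY))) := by ring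

end Aux

lemma conj_eq_conj' : @_root_.conj = @conj' := by
  funext n k lam j
  unfold _root_.conj conj'
  congr


open Classical in
/-- Dual Cauchy identity: the sum runs over partitions contained in the n×k rectangle,
encoded as antitone functions Fin n → Fin (k+1). -/
theorem stmt5 (n k : ℕ) (x : Fin n → ℝ) (y : Fin k → ℝ)
    (hx : Function.Injective x) (hy : Function.Injective y) :
    (∑ f ∈ Finset.univ.filter
        (fun f : Fin n → Fin (k + 1) => Antitone fun i => ((f i : ℕ))),
      schur n (fun i => (f i : ℕ)) x * schur k (conj n k (fun i => (f i : ℕ))) y) =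
    ∏ i : Fin n, ∏ j : Fin k, (1 + x i * y j) := by
  classical
  have hVx : (∏ i, ∏ j ∈ Finset.Ioi i, (x j - x i)) ≠ 0 := by
    rw [Finset.prod_ne_zero_iff]
    intro i _
    rw [Finset.prod_ne_zero_iff]
    intro j hj
    have hij : i < j := Finset.mem_Ioi.mp hj
    exact sub_ne_zero.mpr (fun h => absurd (hx h) (ne_of_gt hij))
  have hVy : (∏ i, ∏ j ∈ Finset.Ioi i, (y j - y i)) ≠ 0 := by
    rw [Finset.prod_ne_zero_iff]
    intro i _
    rw [Finset.prod_ne_zero_iff]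
    intro j hj
    have hij : i < j := Finset.mem_Ioi.mp hj
    exact sub_ne_zero.mpr (fun h => absurd (hy h) (ne_of_gt hij))
  have hDx := det_denom x
  have hDy := det_denom y
  rw [sign_rev_real] at hDx hDy
  have hkey := key_sum x y
  have hbig := det_bigM x y
  have hE1 : ((-1 : ℝ) ^ (∑ i : Fin n, (n - 1 - (i : ℕ)))) ≠ 0 := by
    apply pow_ne_zero; norm_num
  have hE2 : ((-1 : ℝ) ^ (∑ j : Fin k, (k - 1 - (j : ℕ)))) ≠ 0 := by
    apply pow_ne_zero; norm_num
  have hstep : ∀ f ∈ Finset.univ.filter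
      (fun f : Fin n → Fin (k + 1) => Antitone fun i => ((f i : ℕ))),
      schur n (fun i => (f i : ℕ)) x * schur k (_root_.conj n k (fun i => (f i : ℕ))) y =
      ((Matrix.of fun i j : Fin n => x j ^ ((f i : ℕ) + (n - 1 - (i : ℕ)))).det *
       (Matrix.of fun i j : Fin k =>
          y j ^ (conj' n k (fun i => (f i : ℕ)) i + (k - 1 - (i : ℕ)))).det) *
      ((Matrix.det (Matrix.of fun i j : Fin n => x j ^ (n - 1 - (i : ℕ)))) *
       (Matrix.det (Matrix.of fun i j : Fin k => y j ^ (k - 1 - (i : ℕ)))))⁻¹ := by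
    intro f _
    simp only [schur, conj_eq_conj']
    rw [div_mul_div_comm, div_eq_mul_inv]
  rw [Finset.sum_congr rfl hstep, ← Finset.sum_mul, hkey, hbig, hDx, hDy]
  field_simp
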